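/- Let K be a field, n ≥ 1, and let X ∈ M_n(K) be a regular nilpotent matrix, i.e. Xⁿ = 0 and X^{n−1} ≠ 0. Let C = {g ∈ GL_n(K) : gX = Xg}, a subgroup of GL_n(K), and let N = {g ∈ GL_n(K) : gCg⁻¹ = C} be the normalizer of C in GL_n(K). Then every element of N preserves each subspace ker(Xⁱ) ⊆ Kⁿ for 1 ≤ i ≤ n (the unique complete flag stabilized by X); in particular, N is a solvable group. -/

import Mathlib

open Matrix

section AuxiliaryLemmas

variable {K : Type*} [Field K] {n : ℕ}

/-- entries vanish strictly above the `k`-th subdiagonal -/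
def Sh (k : ℕ) (A : Matrix (Fin n) (Fin n) K) : Prop :=
  ∀ t s : Fin n, (t:ℕ) < (s:ℕ) + k → A t s = 0

lemma Sh.mono {j k : ℕ} {A : Matrix (Fin n) (Fin n) K} (h : Sh k A) (hjk : j ≤ k) : Sh j A :=
  fun t s hts => h t s (hts.trans_le (by omega))

lemma Sh.add {k : ℕ} {A B : Matrix (Fin n) (Fin n) K} (hA : Sh k A) (hB : Sh k B) :
    Sh k (A + B) := fun t s h => by simp [Matrix.add_apply, hA t s h, hB t s h]

lemma Sh.neg {k : ℕ} {A : Matrix (Fin n) (Fin n) K} (hA : Sh k A) : Sh k (-A) :=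
  fun t s h => by simp [Matrix.neg_apply, hA t s h]

lemma Sh.sub {k : ℕ} {A B : Matrix (Fin n) (Fin n) K} (hA : Sh k A) (hB : Sh k B) :
    Sh k (A - B) := fun t s h => by simp [Matrix.sub_apply, hA t s h, hB t s h]

lemma Sh.one : Sh 0 (1 : Matrix (Fin n) (Fin n) K) := by
  intro t s h
  exact Matrix.one_apply_ne (by intro he; rw [he] at h; omega)

lemma Sh.mul {j k : ℕ} {A B : Matrix (Fin n) (Fin n) K} (hA : Sh j A) (hB : Sh k B) :
    Sh (j + k) (A * B) := by
  intro t s h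
  rw [Matrix.mul_apply]
  apply Finset.sum_eq_zero
  intro r _
  rcases lt_or_ge (t:ℕ) ((r:ℕ) + j) with hr | hr
  · rw [hA t r hr, zero_mul]
  · rw [hB r s (by omega), mul_zero]

/-- diagonal entries of product of two `Sh 0` matrices multiply; commutator gains one. -/
lemma Sh.comm_zero {A B : Matrix (Fin n) (Fin n) K} (hA : Sh 0 A) (hB : Sh 0 B) :
    Sh 1 (A * B - B * A) := by
  intro t s h
  rcases lt_or_ge (t:ℕ) (s:ℕ) with hts | hts
  · rw [Matrix.sub_apply, (hA.mul hB) t s (by omega), (hB.mul hA) t s (by omega), sub_zero]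
  · have hts' : t = s := Fin.ext (by omega)
    subst hts'
    have hdiag : ∀ (C D : Matrix (Fin n) (Fin n) K), Sh 0 C → Sh 0 D →
        (C * D) t t = C t t * D t t := by
      intro C D hC hD
      rw [Matrix.mul_apply]
      refine Finset.sum_eq_single t ?_ ?_
      · intro r _ hr
        rcases lt_or_ge (t:ℕ) (r:ℕ) with h1 | h1
        · rw [hC t r (by omega), zero_mul]
        · have : (r:ℕ) < (t:ℕ) := by
            rcases h1.lt_or_eq with h2 | h2
            · exact h2
            · exact absurd (Fin.ext h2) hr
          rw [hD r t (by omega), mul_zero]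
      · intro hmem; exact absurd (Finset.mem_univ t) hmem
    rw [Matrix.sub_apply, hdiag A B hA hB, hdiag B A hB hA, mul_comm, sub_self]

lemma key_vanish {X : Matrix (Fin n) (Fin n) K} {w : Fin n → K}
    (hXn : X ^ n = 0) (hw : (X ^ (n-1)) *ᵥ w ≠ 0)
    (c : Fin n → K) (i : ℕ)
    (hsum : ∑ r : Fin n, c r • ((X ^ ((r:ℕ) + i)) *ᵥ w) = 0) :
    ∀ t : Fin n, (t:ℕ) + i < n → c t = 0 := by
  have hpow : ∀ e : ℕ, n ≤ e → X ^ e = 0 := fun e he => pow_eq_zero_of_le he hXn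
  suffices h : ∀ m : ℕ, ∀ t : Fin n, (t:ℕ) = m → (t:ℕ) + i < n → c t = 0 by
    intro t ht; exact h (t:ℕ) t rfl ht
  intro m
  induction m using Nat.strong_induction_on with
  | _ m IH =>
    intro t htm hti
    set d : ℕ := n - 1 - i - m with hd
    have happ := congrArg (fun v => (X ^ d) *ᵥ v) hsum
    simp only [Matrix.mulVec_zero] at happ
    have hms : (X ^ d) *ᵥ (∑ r : Fin n, c r • ((X ^ ((r:ℕ) + i)) *ᵥ w))
        = ∑ r : Fin n, (X ^ d) *ᵥ (c r • ((X ^ ((r:ℕ) + i)) *ᵥ w)) := by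
      simpa only [Matrix.mulVecLin_apply] using map_sum ((X ^ d).mulVecLin)
        (fun r : Fin n => c r • ((X ^ ((r:ℕ) + i)) *ᵥ w)) Finset.univ
    rw [hms] at happ
    have hterm : ∀ r : Fin n,
        (X ^ d) *ᵥ (c r • ((X ^ ((r:ℕ) + i)) *ᵥ w))
          = c r • ((X ^ (d + ((r:ℕ) + i))) *ᵥ w) := by
      intro r
      rw [Matrix.mulVec_smul, Matrix.mulVec_mulVec, ← pow_add]
    simp only [hterm] at happ
    have hsingle : ∑ r : Fin n, c r • ((X ^ (d + ((r:ℕ) + i))) *ᵥ w)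
        = c t • ((X ^ (n-1)) *ᵥ w) := by
      rw [Finset.sum_eq_single t]
      · have he : d + ((t:ℕ) + i) = n - 1 := by omega
        rw [he]
      · intro r _ hrt
        rcases lt_or_ge (r:ℕ) m with hr | hr
        · rw [IH (r:ℕ) hr r rfl (by omega), zero_smul]
        · have : n ≤ d + ((r:ℕ) + i) := by
            have : (r:ℕ) ≠ m := fun he => hrt (Fin.ext (he.trans htm.symm))
            omega
          rw [hpow _ this, Matrix.zero_mulVec, smul_zero]
      · intro hmem; exact absurd (Finset.mem_univ t) hmem
    rw [hsingle] at happ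
    rcases smul_eq_zero.mp happ with h | h
    · exact h
    · exact absurd h hw

lemma mulVec_sum' {ι : Type*} (s : Finset ι) (A : Matrix (Fin n) (Fin n) K)
    (f : ι → (Fin n → K)) : A *ᵥ (∑ r ∈ s, f r) = ∑ r ∈ s, A *ᵥ f r := by
  simpa only [Matrix.mulVecLin_apply] using map_sum A.mulVecLin f s

lemma sum_mulVec' {ι : Type*} (s : Finset ι) (f : ι → Matrix (Fin n) (Fin n) K)
    (v : Fin n → K) : (∑ r ∈ s, f r) *ᵥ v = ∑ r ∈ s, f r *ᵥ v := by
  have h := map_sum (Matrix.toLin' : Matrix (Fin n) (Fin n) K ≃ₗ[K] _) f s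
  calc (∑ r ∈ s, f r) *ᵥ v = Matrix.toLin' (∑ r ∈ s, f r) v := (Matrix.toLin'_apply _ _).symm
    _ = ∑ r ∈ s, f r *ᵥ v := by
        rw [h, LinearMap.sum_apply]
        exact Finset.sum_congr rfl fun r _ => Matrix.toLin'_apply _ _

noncomputable def cycB (hn : 1 ≤ n) {X : Matrix (Fin n) (Fin n) K} {w : Fin n → K}
    (hXn : X ^ n = 0) (hw : (X ^ (n-1)) *ᵥ w ≠ 0) : Module.Basis (Fin n) K (Fin n → K) :=
  haveI : Nonempty (Fin n) := ⟨⟨0, hn⟩⟩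
  basisOfLinearIndependentOfCardEqFinrank
    (by
      rw [Fintype.linearIndependent_iff]
      intro c hc t
      refine key_vanish hXn hw c 0 ?_ t (by omega)
      simpa using hc)
    (by simp [Module.finrank_pi])

lemma cycB_apply (hn : 1 ≤ n) {X : Matrix (Fin n) (Fin n) K} {w : Fin n → K}
    (hXn : X ^ n = 0) (hw : (X ^ (n-1)) *ᵥ w ≠ 0) (t : Fin n) :
    cycB hn hXn hw t = (X ^ (t:ℕ)) *ᵥ w := by
  haveI : Nonempty (Fin n) := ⟨⟨0, hn⟩⟩
  exact congrFun (coe_basisOfLinearIndependentOfCardEqFinrank _ _) t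

lemma commute_poly (hn : 1 ≤ n) {X : Matrix (Fin n) (Fin n) K}
    (hXn : X ^ n = 0) {w : Fin n → K} (hw : (X ^ (n-1)) *ᵥ w ≠ 0)
    {Z : Matrix (Fin n) (Fin n) K} (hZX : Z * X = X * Z) :
    ∃ a : ℕ → K, Z = ∑ t ∈ Finset.range n, a t • X ^ t := by
  haveI : Nonempty (Fin n) := ⟨⟨0, hn⟩⟩
  set B := cycB hn hXn hw with hBdef
  have hB : ∀ t : Fin n, B t = (X ^ (t:ℕ)) *ᵥ w := cycB_apply hn hXn hw
  set c : Fin n → K := fun t => B.repr (Z *ᵥ w) t with hcdef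
  refine ⟨fun t => if h : t < n then c ⟨t, h⟩ else 0, ?_⟩
  have hZw : Z *ᵥ w = ∑ s : Fin n, c s • ((X ^ (s:ℕ)) *ᵥ w) := by
    conv_lhs => rw [← B.sum_repr (Z *ᵥ w)]
    exact Finset.sum_congr rfl fun s _ => by rw [hB]
  have hcomm : Commute Z X := hZX
  apply Matrix.toLin'.injective
  apply B.ext
  intro t
  rw [Matrix.toLin'_apply, Matrix.toLin'_apply, hB t]
  have lhs : Z *ᵥ ((X ^ (t:ℕ)) *ᵥ w) = ∑ s : Fin n, c s • ((X ^ ((s:ℕ) + (t:ℕ))) *ᵥ w) := by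
    rw [Matrix.mulVec_mulVec, (hcomm.pow_right (t:ℕ)).eq, ← Matrix.mulVec_mulVec, hZw,
      mulVec_sum']
    refine Finset.sum_congr rfl fun s _ => ?_
    rw [Matrix.mulVec_smul, Matrix.mulVec_mulVec, ← pow_add, add_comm (t:ℕ) (s:ℕ)]
  rw [lhs, sum_mulVec']
  rw [← Fin.sum_univ_eq_sum_range
    (fun u => ((if h : u < n then c ⟨u, h⟩ else 0) • X ^ u) *ᵥ ((X ^ (t:ℕ)) *ᵥ w)) n]
  refine (Finset.sum_congr rfl fun s _ => ?_).symm
  rw [dif_pos s.isLt, Fin.eta, Matrix.smul_mulVec, Matrix.mulVec_mulVec, ← pow_add]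

lemma reg_comm_ker (hn : 1 ≤ n) {X : Matrix (Fin n) (Fin n) K}
    (hXn : X ^ n = 0) {w : Fin n → K} (hw : (X ^ (n-1)) *ᵥ w ≠ 0)
    {Z : Matrix (Fin n) (Fin n) K} (hZX : Z * X = X * Z)
    (hZn : Z ^ n = 0) (hZreg : Z ^ (n-1) ≠ 0) :
    ∀ (i : ℕ) (u : Fin n → K), (Z ^ i) *ᵥ u = 0 → (X ^ i) *ᵥ u = 0 := by
  obtain ⟨a, ha⟩ := commute_poly hn hXn hw hZX
  have hM01 : (0 : Matrix (Fin n) (Fin n) K) ≠ 1 := by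
    intro h
    have := congrFun (congrFun h ⟨0, hn⟩) ⟨0, hn⟩
    simp at this
  obtain ⟨m, rfl⟩ : ∃ m, n = m + 1 := ⟨n - 1, by omega⟩
  -- the "shifted" polynomial S with Z = a 0 • 1 + X * S
  set S := ∑ i ∈ Finset.range m, a (i + 1) • X ^ i with hSdef
  have hXS : Commute X S :=
    Commute.sum_right _ _ _ fun i _ => ((Commute.refl X).pow_right i).smul_right _
  have hXSsum : X * S = ∑ i ∈ Finset.range m, a (i + 1) • X ^ (i + 1) := by
    rw [hSdef, Finset.mul_sum]
    exact Finset.sum_congr rfl fun i _ => by rw [mul_smul_comm, ← pow_succ']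
  have hZ' : Z = a 0 • 1 + X * S := by
    rw [ha, Finset.sum_range_succ', hXSsum, pow_zero]
    exact add_comm _ _
  have ha0 : a 0 = 0 := by
    by_contra h0
    have hnil : IsNilpotent (X * S) := ⟨m + 1, by rw [hXS.mul_pow, hXn, zero_mul]⟩
    have hu : IsUnit (a 0 • (1 : Matrix (Fin (m+1)) (Fin (m+1)) K)) := by
      rw [← Algebra.algebraMap_eq_smul_one]
      exact (isUnit_iff_ne_zero.mpr h0).map (algebraMap K _)
    have hcomm : Commute (X * S) (a 0 • 1) := (Commute.one_right _).smul_right _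
    have hZu : IsUnit Z := hZ' ▸ hnil.isUnit_add_left_of_commute hu hcomm
    have := hZu.pow (m + 1)
    rw [hZn] at this
    exact hM01 (isUnit_zero_iff.mp this)
  have hZS : Z = X * S := by rw [hZ', ha0, zero_smul, zero_add]
  rcases Nat.eq_zero_or_pos m with rfl | hm
  · -- n = 1 : everything trivial
    intro i u hu
    cases i with
    | zero => simpa using hu
    | succ i => rw [pow_eq_zero_of_le (by omega) hXn, Matrix.zero_mulVec]
  · obtain ⟨p, rfl⟩ : ∃ p, m = p + 1 := ⟨m - 1, by omega⟩
    set S₂ := ∑ i ∈ Finset.range p, a (i + 2) • X ^ i with hS₂def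
    have hXS₂ : Commute X S₂ :=
      Commute.sum_right _ _ _ fun i _ => ((Commute.refl X).pow_right i).smul_right _
    have hXS₂sum : X * S₂ = ∑ i ∈ Finset.range p, a (i + 2) • X ^ (i + 1) := by
      rw [hS₂def, Finset.mul_sum]
      exact Finset.sum_congr rfl fun i _ => by rw [mul_smul_comm, ← pow_succ']
    have hS' : S = a 1 • 1 + X * S₂ := by
      rw [hSdef, Finset.sum_range_succ', hXS₂sum, pow_zero]
      exact add_comm _ _
    have ha1 : a 1 ≠ 0 := by
      intro h1
      have hZXX : Z = X ^ 2 * S₂ := by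
        rw [hZS, hS', h1, zero_smul, zero_add, ← mul_assoc, ← sq]
      have : Z ^ (p + 1) = 0 := by
        rw [hZXX, (hXS₂.pow_left 2).mul_pow, ← pow_mul,
          pow_eq_zero_of_le (by omega) hXn, zero_mul]
      exact hZreg (by simpa using this)
    have hSu : IsUnit S := by
      have hnil : IsNilpotent (X * S₂) := ⟨p + 2, by rw [hXS₂.mul_pow, hXn, zero_mul]⟩
      have hu : IsUnit (a 1 • (1 : Matrix (Fin (p+1+1)) (Fin (p+1+1)) K)) := by
        rw [← Algebra.algebraMap_eq_smul_one]
        exact (isUnit_iff_ne_zero.mpr ha1).map (algebraMap K _)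
      have hcomm : Commute (X * S₂) (a 1 • 1) := (Commute.one_right _).smul_right _
      exact hS' ▸ hnil.isUnit_add_left_of_commute hu hcomm
    intro i u hu
    rcases le_or_gt (p + 1 + 1) i with hi | hi
    · rw [pow_eq_zero_of_le hi hXn, Matrix.zero_mulVec]
    · set q := hSu.unit with hqdef
      have hq' : (q : Matrix (Fin (p+1+1)) (Fin (p+1+1)) K) = S := hSu.unit_spec
      have hSX : S ^ i * X ^ i = Z ^ i := by
        rw [hZS, hXS.mul_pow, (hXS.pow_pow i i).eq]
      have hval : ((q ^ i : _ˣ) : Matrix (Fin (p+1+1)) (Fin (p+1+1)) K) = S ^ i := by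
        rw [Units.val_pow_eq_pow_val, hq']
      calc (X ^ i) *ᵥ u
          = ((↑((q ^ i)⁻¹) * ↑(q ^ i)) * X ^ i) *ᵥ u := by
            rw [Units.inv_mul, one_mul]
        _ = ↑((q ^ i)⁻¹) *ᵥ ((S ^ i * X ^ i) *ᵥ u) := by
            rw [Matrix.mulVec_mulVec, mul_assoc, hval]
        _ = 0 := by rw [hSX, hu, Matrix.mulVec_zero]

-- (a) coordinates of vectors in ker X^i vanish below n - i
lemma repr_vanish (hn : 1 ≤ n) {X : Matrix (Fin n) (Fin n) K}
    (hXn : X ^ n = 0) {w : Fin n → K} (hw : (X ^ (n-1)) *ᵥ w ≠ 0)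
    (v : Fin n → K) (i : ℕ) (hv : (X ^ i) *ᵥ v = 0) :
    ∀ t : Fin n, (t:ℕ) + i < n → (cycB hn hXn hw).repr v t = 0 := by
  set B := cycB hn hXn hw with hBdef
  apply key_vanish hXn hw (fun t => B.repr v t) i
  have hv' : v = ∑ r : Fin n, B.repr v r • ((X ^ (r:ℕ)) *ᵥ w) := by
    conv_lhs => rw [← B.sum_repr v]
    exact Finset.sum_congr rfl fun r _ => by rw [hBdef, cycB_apply]
  calc ∑ r : Fin n, B.repr v r • ((X ^ ((r:ℕ) + i)) *ᵥ w)
      = (X ^ i) *ᵥ ∑ r : Fin n, B.repr v r • ((X ^ (r:ℕ)) *ᵥ w) := by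
        rw [mulVec_sum']
        exact Finset.sum_congr rfl fun r _ => by
          rw [Matrix.mulVec_smul, Matrix.mulVec_mulVec, ← pow_add, add_comm i (r:ℕ)]
    _ = 0 := by rw [← hv', hv]

-- (b,c,d) basis matrix and conjugated entries
lemma conj_entry (B : Module.Basis (Fin n) K (Fin n → K)) :
    ∃ Pu : (Matrix (Fin n) (Fin n) K)ˣ, ∀ (g : (Matrix (Fin n) (Fin n) K)ˣ) (t s : Fin n),
      (↑(Pu⁻¹ * g * Pu) : Matrix (Fin n) (Fin n) K) t s
        = B.repr ((g : Matrix (Fin n) (Fin n) K) *ᵥ B s) t := by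
  classical
  set P : Matrix (Fin n) (Fin n) K := (Pi.basisFun K (Fin n)).toMatrix ⇑B with hPdef
  haveI : Invertible P := (Pi.basisFun K (Fin n)).invertibleToMatrix B
  refine ⟨unitOfInvertible P, fun g t s => ?_⟩
  have hPapp : ∀ t s : Fin n, P t s = B s t := by
    intro t s
    rw [hPdef, Module.Basis.toMatrix_apply, Pi.basisFun_repr]
  have hPmul : ∀ c : Fin n → K, P *ᵥ c = ∑ r : Fin n, c r • B r := by
    intro c
    funext t'
    rw [Matrix.mulVec, dotProduct, Finset.sum_apply]
    exact Finset.sum_congr rfl fun r _ => by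
      rw [hPapp, Pi.smul_apply, smul_eq_mul, mul_comm]
  have hPinv : ∀ u : Fin n → K, (⅟P) *ᵥ u = fun t' => B.repr u t' := by
    intro u
    have h1 : P *ᵥ (fun t' => B.repr u t') = u := by
      rw [hPmul]; exact B.sum_repr u
    calc (⅟P) *ᵥ u = (⅟P) *ᵥ (P *ᵥ (fun t' => B.repr u t')) := by rw [h1]
      _ = ((⅟P) * P) *ᵥ (fun t' => B.repr u t') := by rw [Matrix.mulVec_mulVec]
      _ = _ := by rw [invOf_mul_self, Matrix.one_mulVec]
  have hval : (↑(unitOfInvertible P)⁻¹ : Matrix (Fin n) (Fin n) K) = ⅟P := rfl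
  have hval2 : (↑(unitOfInvertible P) : Matrix (Fin n) (Fin n) K) = P := rfl
  rw [Units.val_mul, Units.val_mul, hval, hval2, Matrix.mul_assoc]
  have hcol : ∀ r : Fin n, ((g : Matrix (Fin n) (Fin n) K) * P) r s
      = ((g : Matrix (Fin n) (Fin n) K) *ᵥ B s) r := by
    intro r
    rw [Matrix.mul_apply]
    simp only [Matrix.mulVec, dotProduct]
    exact Finset.sum_congr rfl fun r' _ => by rw [hPapp]
  calc (⅟P * ((g : Matrix (Fin n) (Fin n) K) * P)) t s
      = ((⅟P) *ᵥ fun r => ((g : Matrix (Fin n) (Fin n) K) * P) r s) t := rfl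
    _ = ((⅟P) *ᵥ ((g : Matrix (Fin n) (Fin n) K) *ᵥ B s)) t :=
        congrArg (fun v => ((⅟P) *ᵥ v) t) (funext hcol)
    _ = B.repr ((g : Matrix (Fin n) (Fin n) K) *ᵥ B s) t := by rw [hPinv]

lemma Sh.zero {k : ℕ} : Sh k (0 : Matrix (Fin n) (Fin n) K) := fun _ _ _ => rfl

/-- the subgroup of `N'` of elements which are `1 + (k-shifted strictly lower triangular)`
in the cyclic basis. -/
def Tk (N' : Subgroup (Matrix (Fin n) (Fin n) K)ˣ)
    (hN' : ∀ y ∈ N', Sh 0 ((y : Matrix (Fin n) (Fin n) K) - 1)) (k : ℕ) :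
    Subgroup (Matrix (Fin n) (Fin n) K)ˣ where
  carrier := {y | y ∈ N' ∧ Sh k ((y : Matrix (Fin n) (Fin n) K) - 1)}
  one_mem' := ⟨N'.one_mem, by simpa using Sh.zero⟩
  mul_mem' := by
    rintro a b ⟨haN, ha⟩ ⟨hbN, hb⟩
    refine ⟨N'.mul_mem haN hbN, ?_⟩
    have hid : (↑(a * b) : Matrix (Fin n) (Fin n) K) - 1
        = ((↑a : Matrix (Fin n) (Fin n) K) - 1) * ((↑b : Matrix (Fin n) (Fin n) K) - 1)
          + ((↑a : Matrix (Fin n) (Fin n) K) - 1) + ((↑b : Matrix (Fin n) (Fin n) K) - 1) := by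
      rw [Units.val_mul]
      noncomm_ring
    rw [hid]
    exact (((ha.mul hb).mono (by omega)).add ha).add hb
  inv_mem' := by
    rintro a ⟨haN, ha⟩
    refine ⟨N'.inv_mem haN, ?_⟩
    have hAi : Sh 0 (↑a⁻¹ : Matrix (Fin n) (Fin n) K) := by
      have h1 := (hN' a⁻¹ (N'.inv_mem haN)).add Sh.one
      simpa using h1
    have hid : (↑a⁻¹ : Matrix (Fin n) (Fin n) K) - 1
        = -((↑a⁻¹ : Matrix (Fin n) (Fin n) K) * ((↑a : Matrix (Fin n) (Fin n) K) - 1)) := by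
      rw [mul_sub, mul_one, ← Units.val_mul, inv_mul_cancel, Units.val_one, neg_sub]
    rw [hid]
    exact ((hAi.mul ha).mono (by omega)).neg

lemma mem_Tk {N' : Subgroup (Matrix (Fin n) (Fin n) K)ˣ}
    {hN' : ∀ y ∈ N', Sh 0 ((y : Matrix (Fin n) (Fin n) K) - 1)} {k : ℕ}
    {y : (Matrix (Fin n) (Fin n) K)ˣ} :
    y ∈ Tk N' hN' k ↔ y ∈ N' ∧ Sh k ((y : Matrix (Fin n) (Fin n) K) - 1) := Iff.rfl

open scoped commutatorElement in
lemma Tk_comm {N' : Subgroup (Matrix (Fin n) (Fin n) K)ˣ}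
    {hN' : ∀ y ∈ N', Sh 0 ((y : Matrix (Fin n) (Fin n) K) - 1)} {j k : ℕ}
    {a b : (Matrix (Fin n) (Fin n) K)ˣ}
    (ha : a ∈ Tk N' hN' j) (hb : b ∈ Tk N' hN' k) :
    ⁅a, b⁆ ∈ Tk N' hN' (max (j + k) 1) := by
  obtain ⟨haN, haS⟩ := ha
  obtain ⟨hbN, hbS⟩ := hb
  refine ⟨N'.mul_mem (N'.mul_mem (N'.mul_mem haN hbN) (N'.inv_mem haN)) (N'.inv_mem hbN), ?_⟩
  set A : Matrix (Fin n) (Fin n) K := ↑a with hA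
  set B : Matrix (Fin n) (Fin n) K := ↑b with hB
  set Ai : Matrix (Fin n) (Fin n) K := ↑a⁻¹ with hAi
  set Bi : Matrix (Fin n) (Fin n) K := ↑b⁻¹ with hBi
  have haa : A * Ai = 1 := a.mul_inv
  have hbb : B * Bi = 1 := b.mul_inv
  have hval : (↑⁅a, b⁆ : Matrix (Fin n) (Fin n) K) = A * B * Ai * Bi := by
    rw [commutatorElement_def, Units.val_mul, Units.val_mul, Units.val_mul]
  have hid : A * B * Ai * Bi - 1 = (A * B - B * A) * (Ai * Bi) := by
    rw [sub_mul, mul_assoc (A * B) Ai Bi]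
    congr 1
    rw [mul_assoc B A (Ai * Bi), ← mul_assoc A Ai Bi, haa, one_mul, hbb]
  have hcomm : A * B - B * A = (A - 1) * (B - 1) - (B - 1) * (A - 1) := by noncomm_ring
  have hShc : Sh (max (j + k) 1) (A * B - B * A) := by
    rcases Nat.eq_zero_or_pos (j + k) with h0 | hpos
    · have hj : j = 0 := by omega
      have hk : k = 0 := by omega
      subst hj; subst hk
      rw [hcomm]
      simpa using Sh.comm_zero haS hbS
    · have : max (j + k) 1 = j + k := by omega
      rw [this, hcomm]
      exact (haS.mul hbS).sub ((hbS.mul haS).mono (by omega))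
  have hShAi : Sh 0 Ai := by
    have h1 := (hN' a⁻¹ (N'.inv_mem haN)).add Sh.one
    simpa only [sub_add_cancel] using h1
  have hShBi : Sh 0 Bi := by
    have h1 := (hN' b⁻¹ (N'.inv_mem hbN)).add Sh.one
    simpa only [sub_add_cancel] using h1
  rw [hval, hid]
  have := hShc.mul (hShAi.mul hShBi)
  simpa using this

lemma Tk_mono {N' : Subgroup (Matrix (Fin n) (Fin n) K)ˣ}
    {hN' : ∀ y ∈ N', Sh 0 ((y : Matrix (Fin n) (Fin n) K) - 1)} {j k : ℕ} (hjk : j ≤ k) :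
    Tk N' hN' k ≤ Tk N' hN' j := fun y hy => ⟨hy.1, hy.2.mono hjk⟩

/-- iterated doubling bound for the derived series -/
def dfun : ℕ → ℕ
  | 0 => 0
  | m + 1 => max (dfun m + dfun m) 1

lemma dfun_ge : ∀ m : ℕ, 1 ≤ m → m ≤ dfun m := by
  intro m
  induction m with
  | zero => omega
  | succ m ih =>
      intro _
      rcases Nat.eq_zero_or_pos m with rfl | hm
      · simp [dfun]
      · have := ih hm
        have : m + 1 ≤ dfun m + dfun m := by omega
        simp only [dfun]
        omega

lemma solvable_of_triangular (hn : 1 ≤ n) (N' : Subgroup (Matrix (Fin n) (Fin n) K)ˣ)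
    (hN' : ∀ y ∈ N', Sh 0 ((y : Matrix (Fin n) (Fin n) K) - 1)) : IsSolvable ↥N' := by
  have claim : ∀ m : ℕ, (derivedSeries ↥N' m).map N'.subtype ≤ Tk N' hN' (dfun m) := by
    intro m
    induction m with
    | zero =>
        rintro y hy
        simp only [derivedSeries_zero] at hy
        rw [← MonoidHom.range_eq_map, N'.range_subtype] at hy
        exact ⟨hy, hN' y hy⟩
    | succ m ih =>
        rw [derivedSeries_succ, Subgroup.map_commutator]
        rw [Subgroup.commutator_le]
        intro g1 h1 g2 h2
        exact Tk_comm (ih h1) (ih h2)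
  have hbot : derivedSeries ↥N' n = ⊥ := by
    rw [Subgroup.eq_bot_iff_forall]
    intro x hx
    have hx' : (↑x : (Matrix (Fin n) (Fin n) K)ˣ) ∈ Tk N' hN' (dfun n) :=
      claim n (Subgroup.mem_map.mpr ⟨x, hx, rfl⟩)
    have hx'' : (↑x : (Matrix (Fin n) (Fin n) K)ˣ) ∈ Tk N' hN' n :=
      Tk_mono (dfun_ge n hn) hx'
    have h1 : ((↑x : (Matrix (Fin n) (Fin n) K)ˣ) : Matrix (Fin n) (Fin n) K) - 1 = 0 := by
      funext t s
      exact hx''.2 t s (by omega)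
    have h2 : (↑x : (Matrix (Fin n) (Fin n) K)ˣ) = 1 :=
      Units.ext (by rw [← sub_eq_zero]; exact h1)
    exact Subtype.ext h2
  exact ⟨⟨n, hbot⟩⟩

end AuxiliaryLemmas

def matrixCentralizer {K : Type*} [Field K] {n : ℕ} (X : Matrix (Fin n) (Fin n) K) :
    Subgroup (Matrix (Fin n) (Fin n) K)ˣ where
  carrier := {g | (g : Matrix (Fin n) (Fin n) K) * X = X * (g : Matrix (Fin n) (Fin n) K)}
  one_mem' := by simp
  mul_mem' := by
    intro a b ha hb
    simp only [Set.mem_setOf_eq, Units.val_mul] at *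
    rw [mul_assoc, hb, ← mul_assoc, ha, mul_assoc]
  inv_mem' := by
    intro a ha
    simp only [Set.mem_setOf_eq] at *
    calc (↑a⁻¹ : Matrix (Fin n) (Fin n) K) * X
        = ↑a⁻¹ * (X * ↑a) * ↑a⁻¹ := by
          rw [mul_assoc, mul_assoc, Units.mul_inv, mul_one]
      _ = ↑a⁻¹ * (↑a * X) * ↑a⁻¹ := by rw [ha]
      _ = X * ↑a⁻¹ := by rw [← mul_assoc, Units.inv_mul, one_mul]


section MainAux

variable {K : Type*} [Field K] {n : ℕ}

lemma exists_cyclic {X : Matrix (Fin n) (Fin n) K} (hXreg : X ^ (n-1) ≠ 0) :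
    ∃ w : Fin n → K, (X ^ (n-1)) *ᵥ w ≠ 0 := by
  have : ∃ i j, (X ^ (n-1)) i j ≠ 0 := by
    by_contra h
    push_neg at h
    exact hXreg (Matrix.ext fun i j => h i j)
  obtain ⟨i, j, hij⟩ := this
  refine ⟨Pi.single j 1, fun h => hij ?_⟩
  have := congrFun h i
  rw [Matrix.mulVec_single] at this
  simpa using this

lemma normalizer_flag (hn : 1 ≤ n) {X : Matrix (Fin n) (Fin n) K}
    (hXn : X ^ n = 0) (hXreg : X ^ (n-1) ≠ 0)
    {g : (Matrix (Fin n) (Fin n) K)ˣ} (hg : g ∈ Subgroup.normalizer (matrixCentralizer X : Set (Matrix (Fin n) (Fin n) K)ˣ)) :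
    ∀ (i : ℕ) (v : Fin n → K), (X ^ i) *ᵥ v = 0 →
      (X ^ i) *ᵥ ((g : Matrix (Fin n) (Fin n) K) *ᵥ v) = 0 := by
  obtain ⟨w, hw⟩ := exists_cyclic hXreg
  set G : Matrix (Fin n) (Fin n) K := ↑g with hG
  set Gi : Matrix (Fin n) (Fin n) K := ↑g⁻¹ with hGi
  have hinv : Gi * G = 1 := g.inv_mul
  have hinvb : G * Gi = 1 := g.mul_inv
  have hinv' : ∀ A : Matrix (Fin n) (Fin n) K, Gi * (G * A) = A := by
    intro A; rw [← mul_assoc, hinv, one_mul]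
  have hX1u : IsUnit ((1 : Matrix (Fin n) (Fin n) K) + X) :=
    IsNilpotent.isUnit_one_add ⟨n, hXn⟩
  have humem : hX1u.unit ∈ matrixCentralizer X := by
    show (↑hX1u.unit : Matrix (Fin n) (Fin n) K) * X = X * (↑hX1u.unit : Matrix (Fin n) (Fin n) K)
    rw [hX1u.unit_spec, one_add_mul, mul_one_add]
  have hmem : g * hX1u.unit * g⁻¹ ∈ matrixCentralizer X :=
    ((Subgroup.mem_normalizer_iff.mp hg) hX1u.unit).mp humem
  set Y : Matrix (Fin n) (Fin n) K := G * X * Gi with hYdef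
  have hYX : Y * X = X * Y := by
    have h1 : (↑(g * hX1u.unit * g⁻¹) : Matrix (Fin n) (Fin n) K) = 1 + Y := by
      rw [Units.val_mul, Units.val_mul, hX1u.unit_spec, hYdef, ← hG, ← hGi]
      rw [mul_add, add_mul, mul_one, hinvb]
    have h2 : (↑(g * hX1u.unit * g⁻¹) : Matrix (Fin n) (Fin n) K) * X
        = X * (↑(g * hX1u.unit * g⁻¹) : Matrix (Fin n) (Fin n) K) := hmem
    rw [h1, one_add_mul, mul_one_add] at h2
    exact add_left_cancel h2
  have hconj : ∀ i : ℕ, Y ^ i = G * X ^ i * Gi := by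
    intro i
    induction i with
    | zero => simp [hinvb]
    | succ i ih =>
        rw [pow_succ, ih, pow_succ, hYdef]
        simp only [mul_assoc, hinv']
  have hYn : Y ^ n = 0 := by rw [hconj, hXn, mul_zero, zero_mul]
  have hYreg : Y ^ (n-1) ≠ 0 := by
    intro h
    rw [hconj] at h
    apply hXreg
    have := congrArg (fun A => Gi * A * G) h
    simp only [mul_zero, zero_mul] at this
    rw [← mul_assoc, hinv', mul_assoc, hinv, mul_one] at this
    exact this
  intro i v hv
  apply reg_comm_ker hn hXn hw hYX hYn hYreg i
  rw [Matrix.mulVec_mulVec, hconj, mul_assoc, hinv, mul_one, ← Matrix.mulVec_mulVec, hv,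
    Matrix.mulVec_zero]

end MainAux

/-- **The normalizer of the centralizer of a regular nilpotent matrix is solvable.**
Let `X ∈ Mₙ(K)` be regular nilpotent (`Xⁿ = 0`, `X^(n-1) ≠ 0`), let
`C = {g ∈ GLₙ(K) : gX = Xg}` and let `N` be the normalizer of `C` in `GLₙ(K)`.
Then every element of `N` preserves each subspace `ker(Xⁱ) ⊆ Kⁿ` for `1 ≤ i ≤ n`;
in particular `N` is solvable. -/
theorem stmt_5 {K : Type*} [Field K] (n : ℕ) (hn : 1 ≤ n)
    (X : Matrix (Fin n) (Fin n) K) (hXn : X ^ n = 0) (hXreg : X ^ (n - 1) ≠ 0) :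
    (∀ g ∈ Subgroup.normalizer (matrixCentralizer X : Set (Matrix (Fin n) (Fin n) K)ˣ), ∀ i : ℕ, 1 ≤ i → i ≤ n →
        ∀ v : Fin n → K, (X ^ i).mulVec v = 0 →
          (X ^ i).mulVec ((g : Matrix (Fin n) (Fin n) K).mulVec v) = 0) ∧
      IsSolvable ↥(Subgroup.normalizer (matrixCentralizer X : Set (Matrix (Fin n) (Fin n) K)ˣ)) := by
  obtain ⟨w, hw⟩ := exists_cyclic hXreg
  constructor
  · intro g hg i _ _ v hv
    exact normalizer_flag hn hXn hXreg hg i v hv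
  · -- solvability via conjugation into a triangular group
    set B := cycB hn hXn hw with hBdef
    obtain ⟨Pu, hPu⟩ := conj_entry B
    set cj : (Matrix (Fin n) (Fin n) K)ˣ ≃* (Matrix (Fin n) (Fin n) K)ˣ :=
      MulAut.conj Pu⁻¹ with hcj
    set N0 := Subgroup.normalizer (matrixCentralizer X : Set (Matrix (Fin n) (Fin n) K)ˣ) with hN0
    set N' := N0.map cj.toMonoidHom with hN'def
    have hN' : ∀ y ∈ N', Sh 0 ((y : Matrix (Fin n) (Fin n) K) - 1) := by
      intro y hy
      obtain ⟨g, hg, rfl⟩ := Subgroup.mem_map.mp hy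
      intro t s hts
      have hts' : (t:ℕ) < (s:ℕ) := by omega
      have hconj : cj.toMonoidHom g = Pu⁻¹ * g * Pu := by
        rw [hcj]
        show MulAut.conj Pu⁻¹ g = Pu⁻¹ * g * Pu
        rw [MulAut.conj_apply, inv_inv]
      have hval : (↑(cj.toMonoidHom g) : Matrix (Fin n) (Fin n) K) t s
          = B.repr ((g : Matrix (Fin n) (Fin n) K) *ᵥ B s) t := by
        rw [hconj]
        exact hPu g t s
      have hker : (X ^ (n - (s:ℕ))) *ᵥ ((g : Matrix (Fin n) (Fin n) K) *ᵥ B s) = 0 := by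
        apply normalizer_flag hn hXn hXreg hg
        rw [hBdef, cycB_apply, Matrix.mulVec_mulVec, ← pow_add,
          show n - (s:ℕ) + (s:ℕ) = n by omega, hXn, Matrix.zero_mulVec]
      have hrep : B.repr ((g : Matrix (Fin n) (Fin n) K) *ᵥ B s) t = 0 := by
        rw [hBdef]
        exact repr_vanish hn hXn hw _ (n - (s:ℕ)) hker t (by omega)
      rw [Matrix.sub_apply, hval, hrep, Matrix.one_apply_ne (by
        intro hts2
        rw [hts2] at hts'
        omega), sub_zero]
    have hsolv' : IsSolvable ↥N' := solvable_of_triangular hn N' hN'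
    have e : ↥N0 ≃* ↥N' := Subgroup.equivMapOfInjective N0 cj.toMonoidHom cj.injective
    exact @solvable_of_solvable_injective _ _ _ _ e.toMonoidHom e.injective hsolv'
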